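/- For every integer p ≥ 3 and every β > β_0 > β*(p), sup_{x ∈ (m_*(β,p), 1]} H_{β_0,p}(x) = H_{β_0,p}(m_*(β,p)). -/

import Mathlib

open Real Set Filter

/-- `I(x) = ½[(1+x)log(1+x) + (1−x)log(1−x)]` (with `Real.log 0 = 0`). -/
noncomputable def bahI (x : ℝ) : ℝ :=
  ((1 + x) * Real.log (1 + x) + (1 - x) * Real.log (1 - x)) / 2

/-- `H_{β,p}(x) = β xᵖ − I(x)`. -/
noncomputable def bahH (β : ℝ) (p : ℕ) (x : ℝ) : ℝ := β * x ^ p - bahI x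

/-- `β*(p) = sup {β ≥ 0 : sup_{x∈[−1,1]} H_{β,p}(x) = 0}`. -/
noncomputable def betaStar (p : ℕ) : ℝ :=
  sSup {β : ℝ | 0 ≤ β ∧ sSup (bahH β p '' Set.Icc (-1 : ℝ) 1) = 0}

/-- inverse hyperbolic tangent. -/
noncomputable def arctanh (x : ℝ) : ℝ := Real.log ((1 + x) / (1 - x)) / 2

/-- `η_p(t) = p⁻¹ t^{1−p} arctanh t` for `t ≠ 0`, and `η_p(0) = 0`. -/
noncomputable def etaFn (p : ℕ) (t : ℝ) : ℝ :=
  if t = 0 then 0 else (p : ℝ)⁻¹ * t ^ (1 - (p : ℤ)) * arctanh t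

private lemma continuous_bahH' (β : ℝ) (p : ℕ) : Continuous (bahH β p) := by
  have h1 : Continuous fun x : ℝ => (1 + x) * Real.log (1 + x) :=
    Real.continuous_mul_log.comp (continuous_const.add continuous_id)
  have h2 : Continuous fun x : ℝ => (1 - x) * Real.log (1 - x) :=
    Real.continuous_mul_log.comp (continuous_const.sub continuous_id)
  unfold bahH bahI
  exact (continuous_const.mul (continuous_pow p)).sub ((h1.add h2).div_const 2)

private lemma hasDerivAt_bahH' (β : ℝ) (p : ℕ) {x : ℝ} (hx1 : -1 < x) (hx2 : x < 1) :
    HasDerivAt (bahH β p) (β * (p * x ^ (p - 1)) - arctanh x) x := by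
  have h1p : (0:ℝ) < 1 + x := by linarith
  have h1m : (0:ℝ) < 1 - x := by linarith
  have ha : HasDerivAt (fun y : ℝ => 1 + y) 1 x := by
    simpa using (hasDerivAt_id x).const_add 1
  have hb : HasDerivAt (fun y : ℝ => 1 - y) (-1) x := by
    simpa using (hasDerivAt_id x).const_sub 1
  have hl1 : HasDerivAt (fun y : ℝ => Real.log (1 + y)) ((1 + x)⁻¹ * 1) x :=
    (Real.hasDerivAt_log h1p.ne').comp x ha
  have hl2 : HasDerivAt (fun y : ℝ => Real.log (1 - y)) ((1 - x)⁻¹ * (-1)) x :=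
    (Real.hasDerivAt_log h1m.ne').comp x hb
  have d1 : HasDerivAt (fun y : ℝ => (1 + y) * Real.log (1 + y))
      (Real.log (1 + x) + 1) x := by
    have := ha.mul hl1
    refine this.congr_deriv ?_
    rw [← mul_assoc, mul_inv_cancel₀ h1p.ne']
    ring
  have d2 : HasDerivAt (fun y : ℝ => (1 - y) * Real.log (1 - y))
      (-Real.log (1 - x) - 1) x := by
    have := hb.mul hl2
    refine this.congr_deriv ?_
    rw [← mul_assoc, mul_inv_cancel₀ h1m.ne']
    ring
  have dI : HasDerivAt bahI (arctanh x) x := by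
    have := (d1.add d2).div_const 2
    refine this.congr_deriv ?_
    unfold arctanh
    rw [Real.log_div h1p.ne' h1m.ne']
    ring
  have dpow : HasDerivAt (fun y : ℝ => β * y ^ p) (β * (p * x ^ (p - 1))) x :=
    (hasDerivAt_pow p x).const_mul β
  exact dpow.sub dI

private lemma arctanh_strictMono' {c x : ℝ} (hc : -1 < c) (hx : x < 1) (hcx : c < x) :
    arctanh c < arctanh x := by
  have h1 : (0:ℝ) < 1 - c := by linarith
  have h2 : (0:ℝ) < 1 - x := by linarith
  have h3 : (0:ℝ) < 1 + c := by linarith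
  have h4 : (0:ℝ) < 1 + x := by linarith
  unfold arctanh
  have : (1 + c) / (1 - c) < (1 + x) / (1 - x) := by
    rw [div_lt_div_iff₀ h1 h2]
    nlinarith
  have := Real.log_lt_log (div_pos h3 h1) this
  linarith

private lemma m_lt_one' (p : ℕ) (hp : 3 ≤ p) (β : ℝ) (m : ℝ)
    (hm1 : m ∈ Set.Icc (-1:ℝ) 1) (hmax : IsMaxOn (bahH β p) (Set.Icc (-1:ℝ) 1) m) :
    m < 1 := by
  set A : ℝ := |β| * p + 1 with hAdef
  have hA : 0 < A := by positivity
  set E : ℝ := Real.exp (2 * A) with hEdef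
  have hE : 1 < E := by
    have := Real.exp_lt_exp.mpr (show (0:ℝ) < 2 * A by linarith)
    simpa [hEdef] using this
  set c : ℝ := (E - 1) / (E + 1) with hcdef
  have hc0 : 0 < c := div_pos (by linarith) (by linarith)
  have hc1 : c < 1 := by rw [hcdef, div_lt_one (by linarith)]; linarith
  have hAc : arctanh c = A := by
    unfold arctanh
    have h1 : (1 + c) / (1 - c) = E := by
      rw [hcdef]
      field_simp
      ring
    rw [h1, hEdef, Real.log_exp]
    ring
  have anti : StrictAntiOn (bahH β p) (Icc c 1) := by
    apply strictAntiOn_of_deriv_neg (convex_Icc c 1)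
      ((continuous_bahH' β p).continuousOn)
    intro x hx
    rw [interior_Icc] at hx
    obtain ⟨hxc, hx1⟩ := hx
    have hd := hasDerivAt_bahH' β p (by linarith : -1 < x) hx1
    rw [hd.deriv]
    have hxp : x ^ (p - 1) ≤ 1 :=
      pow_le_one₀ (by linarith) (by linarith)
    have hxp0 : 0 ≤ x ^ (p - 1) := pow_nonneg (by linarith) _
    have hb1 : β * (p * x ^ (p - 1)) ≤ |β| * (p * x ^ (p - 1)) := by
      apply mul_le_mul_of_nonneg_right (le_abs_self β)
      positivity
    have hb2 : |β| * (p * x ^ (p - 1)) ≤ |β| * p := by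
      have : (p : ℝ) * x ^ (p - 1) ≤ p * 1 := by
        apply mul_le_mul_of_nonneg_left hxp (by positivity)
      nlinarith [abs_nonneg β]
    have harc : A < arctanh x := by
      rw [← hAc]
      exact arctanh_strictMono' (by linarith) hx1 hxc
    linarith
  have hlt : bahH β p 1 < bahH β p c :=
    anti (by constructor <;> linarith) (by constructor <;> linarith) hc1
  by_contra h
  push_neg at h
  have hm : m = 1 := le_antisymm hm1.2 h
  have := hmax (show c ∈ Icc (-1:ℝ) 1 by constructor <;> linarith)
  rw [hm] at this
  simp only [Set.mem_setOf_eq] at this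
  linarith [this]

/-- For `p ≥ 3` and `β > β₀ > β*(p)`, with `m = m_*(β,p)` the positive global maximizer
of `H_{β,p}` on `[−1,1]`: `sup_{x ∈ (m, 1]} H_{β₀,p}(x) = H_{β₀,p}(m)`. -/
theorem statement7 (p : ℕ) (hp : 3 ≤ p) (β β₀ : ℝ) (h0 : betaStar p < β₀) (h1 : β₀ < β)
    (m : ℝ) (hm0 : 0 < m) (hm1 : m ∈ Set.Icc (-1 : ℝ) 1)
    (hmax : IsMaxOn (bahH β p) (Set.Icc (-1 : ℝ) 1) m) :
    sSup (bahH β₀ p '' Set.Ioc m 1) = bahH β₀ p m := by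
  have hmlt : m < 1 := m_lt_one' p hp β m hm1 hmax
  have hub : ∀ x ∈ Ioc m 1, bahH β₀ p x ≤ bahH β₀ p m := by
    intro x hx
    have hxI : x ∈ Icc (-1:ℝ) 1 := ⟨by linarith [hx.1], hx.2⟩
    have h1' : bahH β p x ≤ bahH β p m := hmax hxI
    have h2 : m ^ p ≤ x ^ p := pow_le_pow_left₀ hm0.le hx.1.le p
    have h3 : (β - β₀) * m ^ p ≤ (β - β₀) * x ^ p :=
      mul_le_mul_of_nonneg_left h2 (by linarith)
    unfold bahH at h1' ⊢
    nlinarith [h1', h3]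
  have hne : (bahH β₀ p '' Ioc m 1).Nonempty :=
    ⟨_, mem_image_of_mem _ (show (1:ℝ) ∈ Ioc m 1 from ⟨hmlt, le_refl 1⟩)⟩
  have hbdd : BddAbove (bahH β₀ p '' Ioc m 1) := by
    refine ⟨bahH β₀ p m, ?_⟩
    rintro y ⟨x, hx, rfl⟩
    exact hub x hx
  apply le_antisymm
  · apply csSup_le hne
    rintro y ⟨x, hx, rfl⟩
    exact hub x hx
  · by_contra h
    push_neg at h
    set S := sSup (bahH β₀ p '' Ioc m 1) with hS
    have hε : 0 < bahH β₀ p m - S := by linarith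
    have hcont : ContinuousAt (bahH β₀ p) m := (continuous_bahH' β₀ p).continuousAt
    rw [Metric.continuousAt_iff] at hcont
    obtain ⟨δ, hδ, hd⟩ := hcont _ hε
    set t : ℝ := min (δ / 2) ((1 - m) / 2) with ht
    have htpos : 0 < t := lt_min (by linarith) (by linarith)
    have ht1 : t ≤ δ / 2 := min_le_left _ _
    have ht2 : t ≤ (1 - m) / 2 := min_le_right _ _
    have hx : m + t ∈ Ioc m 1 := ⟨by linarith, by linarith⟩
    have hdist : dist (m + t) m < δ := by
      rw [Real.dist_eq]
      rw [abs_of_pos (by linarith : (0:ℝ) < m + t - m)]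
      linarith
    have hclose := hd hdist
    rw [Real.dist_eq] at hclose
    have hle : bahH β₀ p (m + t) ≤ S := le_csSup hbdd (mem_image_of_mem _ hx)
    have habs : bahH β₀ p m - bahH β₀ p (m + t) ≤ |bahH β₀ p (m + t) - bahH β₀ p m| := by
      rw [abs_sub_comm]
      exact le_abs_self _
    linarith [abs_lt.mp hclose]
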